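/- arXiv:0902.1959 — 2 statements merged into one kernel-verified Lean document; each statement's English description precedes it below -/
import Mathlib

section
/- Let p be a prime. For t in ℝ or ℚ_p, let M(t) be the 3×3 matrix with rows (1, 2t, t²), (0, 1, t), (0, 0, 1), let h(s,σ) = (M(s), M(σ)) ∈ SL(3,ℝ)×SL(3,ℚ_p) for (s,σ) ∈ ℝ×ℚ_p, let D(g,g') = max(‖g‖_∞, ‖g'‖_p), and let g₀ = (Id, diag(p,1,p⁻¹)). Then for all sufficiently large integers n, the ratio (Leb⊗μ_p){(s,σ) ∈ ℝ×ℚ_p : D(h(s,σ)·g₀) ≤ p^n} / (Leb⊗μ_p){(s,σ) ∈ ℝ×ℚ_p : D(h(s,σ)) ≤ p^n} equals p^{⌊(n−1)/2⌋ − ⌊n/2⌋}; in particular this ratio equals 1 when n is odd and 1/p when n is even, so it converges along each parity class of n but admits no limit as n → ∞. -/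
/-!
STATEMENT 5.
The explicit example showing that volume ratios of skew-balls need a parity splitting:
for H the adjoint unipotent subgroup of SL(3,ℝ)×SL(3,ℚ_p) and g₀ = (Id, diag(p,1,p⁻¹)),
for all large n the ratio of the (Leb⊗μ_p)-measures of the parameter sets of the skew-ball
of radius p^n and of the ball of radius p^n equals p^{⌊(n−1)/2⌋−⌊n/2⌋}; in particular it is
1 for n odd, 1/p for n even, and it has no limit as n → ∞.
-/

open MeasureTheory Filter

/-- The max-norm of a square matrix over a normed field (including ℝ and ℚ_p). -/
noncomputable def matSupNorm {n : ℕ} {K : Type*} [NormedField K]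
    (g : Matrix (Fin n) (Fin n) K) : ℝ :=
  ((Finset.univ.sup fun i => Finset.univ.sup fun j => ‖g i j‖₊ : NNReal) : ℝ)

noncomputable instance (p : ℕ) [Fact p.Prime] : MeasurableSpace ℚ_[p] := borel _

/-- The real unipotent matrix M(s). -/
noncomputable def MR (s : ℝ) : Matrix (Fin 3) (Fin 3) ℝ :=
  !![1, 2 * s, s ^ 2; 0, 1, s; 0, 0, 1]

/-- The p-adic unipotent matrix M(σ). -/
noncomputable def MP (p : ℕ) [Fact p.Prime] (σ : ℚ_[p]) : Matrix (Fin 3) (Fin 3) ℚ_[p] :=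
  !![1, 2 * σ, σ ^ 2; 0, 1, σ; 0, 0, 1]

/-- The p-adic diagonal matrix diag(p,1,p⁻¹). -/
noncomputable def dP (p : ℕ) [Fact p.Prime] : Matrix (Fin 3) (Fin 3) ℚ_[p] :=
  !![(p : ℚ_[p]), 0, 0; 0, 1, 0; 0, 0, (p : ℚ_[p])⁻¹]

/-- The size function D on SL(3,ℝ)×SL(3,ℚ_p) (evaluated on pairs of matrices). -/
noncomputable def sizeD (p : ℕ) [Fact p.Prime]
    (g : Matrix (Fin 3) (Fin 3) ℝ) (g' : Matrix (Fin 3) (Fin 3) ℚ_[p]) : ℝ :=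
  max (matSupNorm g) (matSupNorm g')


instance (p : ℕ) [Fact p.Prime] : BorelSpace ℚ_[p] := ⟨rfl⟩

lemma matSupNorm_le_iff {n : ℕ} [NeZero n] {K : Type*} [NormedField K]
    {g : Matrix (Fin n) (Fin n) K} {C : ℝ} :
    matSupNorm g ≤ C ↔ ∀ i j, ‖g i j‖ ≤ C := by
  constructor
  · intro h i j
    refine le_trans ?_ h
    unfold matSupNorm
    have h1 : ‖g i j‖₊ ≤ (Finset.univ.sup fun j => ‖g i j‖₊) :=
      Finset.le_sup (f := fun j => ‖g i j‖₊) (Finset.mem_univ j)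
    have h2 : (Finset.univ.sup fun j => ‖g i j‖₊)
        ≤ (Finset.univ.sup fun i => Finset.univ.sup fun j => ‖g i j‖₊) :=
      Finset.le_sup (f := fun i => Finset.univ.sup fun j => ‖g i j‖₊) (Finset.mem_univ i)
    exact_mod_cast le_trans h1 h2
  · intro h
    have hC : 0 ≤ C := le_trans (norm_nonneg _) (h 0 0)
    unfold matSupNorm
    rw [show C = ((C.toNNReal : NNReal) : ℝ) from (Real.coe_toNNReal C hC).symm,
      NNReal.coe_le_coe]
    refine Finset.sup_le fun i _ => Finset.sup_le fun j _ => ?_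
    rw [← NNReal.coe_le_coe, Real.coe_toNNReal C hC]
    exact h i j

section Padic
variable {p : ℕ} [Fact p.Prime]

lemma one_lt_pR : (1 : ℝ) < p := by exact_mod_cast (Fact.out : p.Prime).one_lt

lemma p_posR : (0 : ℝ) < p := lt_trans one_pos one_lt_pR

lemma norm_sq_le_pow_iff (σ : ℚ_[p]) (a : ℕ) :
    ‖σ‖ ^ 2 ≤ (p : ℝ) ^ a ↔ ‖σ‖ ≤ (p : ℝ) ^ (a / 2) := by
  rcases eq_or_ne σ 0 with h | h
  · simp only [h, norm_zero]
    norm_num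
  · rw [Padic.norm_eq_zpow_neg_valuation h, ← zpow_natCast (p : ℝ) a, ← zpow_natCast (p : ℝ) (a / 2),
      ← zpow_natCast ((p : ℝ) ^ (-σ.valuation)) 2, ← zpow_mul,
      zpow_le_zpow_iff_right₀ one_lt_pR, zpow_le_zpow_iff_right₀ one_lt_pR]
    push_cast
    omega

lemma norm_two_mul_le (σ : ℚ_[p]) : ‖(2 : ℚ_[p])‖ * ‖σ‖ ≤ ‖σ‖ := by
  have h2 : ‖(2 : ℚ_[p])‖ ≤ 1 := by
    have := Padic.norm_int_le_one (p := p) 2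
    simpa using this
  calc ‖(2 : ℚ_[p])‖ * ‖σ‖ ≤ 1 * ‖σ‖ :=
        mul_le_mul_of_nonneg_right h2 (norm_nonneg σ)
    _ = ‖σ‖ := one_mul _

lemma setP1 (σ : ℚ_[p]) (n : ℕ) :
    matSupNorm (MP p σ) ≤ (p : ℝ) ^ n ↔ ‖σ‖ ≤ (p : ℝ) ^ (n / 2) := by
  rw [matSupNorm_le_iff]
  have h1 : (1 : ℝ) ≤ (p : ℝ) ^ n := one_le_pow₀ one_lt_pR.le
  have h0 : (0 : ℝ) ≤ (p : ℝ) ^ n := le_trans zero_le_one h1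
  simp [MP, Fin.forall_fin_succ, Matrix.cons_val_zero, Matrix.cons_val_one, Matrix.head_cons,
    h0, h1]
  constructor
  · rintro ⟨⟨_, hsq⟩, _⟩
    exact (norm_sq_le_pow_iff σ n).mp hsq
  · intro h
    have hn : ‖σ‖ ≤ (p : ℝ) ^ n :=
      h.trans (pow_le_pow_right₀ one_lt_pR.le (Nat.div_le_self n 2))
    exact ⟨⟨(norm_two_mul_le σ).trans hn, (norm_sq_le_pow_iff σ n).mpr h⟩, hn⟩

lemma setP2 (σ : ℚ_[p]) (n : ℕ) (hn : 1 ≤ n) :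
    matSupNorm (MP p σ * dP p) ≤ (p : ℝ) ^ n ↔ ‖σ‖ ≤ (p : ℝ) ^ ((n - 1) / 2) := by
  rw [matSupNorm_le_iff]
  have h1 : (1 : ℝ) ≤ (p : ℝ) ^ n := one_le_pow₀ one_lt_pR.le
  have h0 : (0 : ℝ) ≤ (p : ℝ) ^ n := le_trans zero_le_one h1
  have hpinv : ((p : ℝ))⁻¹ ≤ (p : ℝ) ^ n := by
    calc ((p : ℝ))⁻¹ ≤ 1 := by
          rw [inv_le_one_iff₀]; right; exact one_lt_pR.le
      _ ≤ _ := h1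
  have hple : (p : ℝ) ≤ (p : ℝ) ^ n := by
    calc (p : ℝ) = (p : ℝ) ^ 1 := (pow_one _).symm
      _ ≤ _ := pow_le_pow_right₀ one_lt_pR.le hn
  have hsplit : (p : ℝ) ^ n = (p : ℝ) ^ (n - 1) * p := by
    rw [← pow_succ]
    congr 1
    omega
  have hpow_le : (p : ℝ) ^ (n - 1) ≤ (p : ℝ) ^ n :=
    pow_le_pow_right₀ one_lt_pR.le (Nat.sub_le n 1)
  have hiff1 : ‖σ‖ ^ 2 * (p : ℝ) ≤ (p : ℝ) ^ n ↔ ‖σ‖ ^ 2 ≤ (p : ℝ) ^ (n - 1) := by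
    rw [hsplit]
    exact mul_le_mul_iff_left₀ p_posR
  have hiff2 : ‖σ‖ * (p : ℝ) ≤ (p : ℝ) ^ n ↔ ‖σ‖ ≤ (p : ℝ) ^ (n - 1) := by
    rw [hsplit]
    exact mul_le_mul_iff_left₀ p_posR
  simp [MP, dP, Matrix.mul_fin_three, Fin.forall_fin_succ, Matrix.cons_val_zero,
    Matrix.cons_val_one, Matrix.head_cons, h0, h1, hpinv, hple]
  constructor
  · rintro ⟨⟨_, hsq⟩, _⟩
    exact (norm_sq_le_pow_iff σ (n - 1)).mp (hiff1.mp hsq)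
  · intro h
    have hn1 : ‖σ‖ ≤ (p : ℝ) ^ (n - 1) :=
      h.trans (pow_le_pow_right₀ one_lt_pR.le (Nat.div_le_self _ 2))
    exact ⟨⟨(norm_two_mul_le σ).trans (hn1.trans hpow_le),
      hiff1.mpr ((norm_sq_le_pow_iff σ (n - 1)).mpr h)⟩, hiff2.mpr hn1⟩

end Padic

section RealSide

lemma setR {p : ℕ} [Fact p.Prime] (s : ℝ) (n : ℕ) (hn : 2 ≤ n) :
    matSupNorm (MR s) ≤ (p : ℝ) ^ n ↔ |s| ≤ Real.sqrt ((p : ℝ) ^ n) := by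
  rw [matSupNorm_le_iff]
  have hp2 : (2 : ℝ) ≤ p := by exact_mod_cast (Fact.out : p.Prime).two_le
  have h4 : (4 : ℝ) ≤ (p : ℝ) ^ n := by
    calc (4 : ℝ) = 2 ^ 2 := by norm_num
      _ ≤ (p : ℝ) ^ 2 := by
          apply pow_le_pow_left₀ (by norm_num) hp2
      _ ≤ (p : ℝ) ^ n := pow_le_pow_right₀ (by linarith) hn
  have h0 : (0 : ℝ) ≤ (p : ℝ) ^ n := by linarith
  have h1 : (1 : ℝ) ≤ (p : ℝ) ^ n := by linarith
  have hr2 : (2 : ℝ) ≤ Real.sqrt ((p : ℝ) ^ n) := by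
    rw [Real.le_sqrt (by norm_num) h0]
    norm_num
    linarith
  have hrsq : Real.sqrt ((p : ℝ) ^ n) ^ 2 = (p : ℝ) ^ n := Real.sq_sqrt h0
  have habs : ∀ t : ℝ, |t| ≤ Real.sqrt ((p : ℝ) ^ n) ↔ t ^ 2 ≤ (p : ℝ) ^ n := by
    intro t
    rw [Real.le_sqrt (abs_nonneg t) h0, sq_abs]
  simp [MR, Fin.forall_fin_succ, Matrix.cons_val_zero, Matrix.cons_val_one, Matrix.head_cons,
    h0, h1]
  rw [habs s]
  constructor
  · rintro ⟨⟨_, hsq⟩, _⟩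
    exact hsq
  · intro h
    have habs' : |s| ≤ Real.sqrt ((p : ℝ) ^ n) := (habs s).mpr h
    have hs : |s| ≤ (p : ℝ) ^ n := by
      calc |s| ≤ Real.sqrt ((p : ℝ) ^ n) := habs'
        _ ≤ Real.sqrt ((p : ℝ) ^ n) * Real.sqrt ((p : ℝ) ^ n) := by
            nlinarith [Real.sqrt_nonneg ((p : ℝ) ^ n)]
        _ = (p : ℝ) ^ n := by nlinarith [hrsq]
    refine ⟨⟨?_, h⟩, hs⟩
    rw [← abs_two]
    calc |(2:ℝ)| * |s| ≤ Real.sqrt ((p : ℝ) ^ n) * Real.sqrt ((p : ℝ) ^ n) := by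
          rw [abs_two]
          apply mul_le_mul hr2 habs' (abs_nonneg s) (Real.sqrt_nonneg _)
      _ = (p : ℝ) ^ n := by nlinarith [hrsq]

end RealSide


section Ball
variable {p : ℕ} [Fact p.Prime]

lemma padicBall_measurableSet (r : ℝ) : MeasurableSet {x : ℚ_[p] | ‖x‖ ≤ r} :=
  (isClosed_le continuous_norm continuous_const).measurableSet

lemma padicBall_succ (k : ℕ) :
    {x : ℚ_[p] | ‖x‖ ≤ (p : ℝ) ^ (k + 1)} =
      ⋃ a ∈ Finset.range p,
        (fun x : ℚ_[p] => x + (-((a : ℚ_[p]) * ((p : ℚ_[p]) ^ ((k + 1 : ℕ) : ℤ))⁻¹)))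
          ⁻¹' {x : ℚ_[p] | ‖x‖ ≤ (p : ℝ) ^ k} := by
  have hp0 : ((p : ℚ_[p])) ≠ 0 := by
    exact_mod_cast (Nat.cast_ne_zero (R := ℚ_[p])).mpr (Fact.out : p.Prime).ne_zero
  have hc0 : ((p : ℚ_[p]) ^ ((k + 1 : ℕ) : ℤ)) ≠ 0 := zpow_ne_zero _ hp0
  have hnormc : ‖((p : ℚ_[p]) ^ ((k + 1 : ℕ) : ℤ))⁻¹‖ = (p : ℝ) ^ (k + 1) := by
    rw [norm_inv, Padic.norm_p_zpow]
    rw [← zpow_neg, neg_neg]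
    norm_cast
  ext x
  simp only [Set.mem_setOf_eq, Set.mem_iUnion, Set.mem_preimage, ← sub_eq_add_neg]
  constructor
  · intro hx
    have hz : ‖(p : ℚ_[p]) ^ (k + 1) * x‖ ≤ 1 := by
      rw [norm_mul, norm_pow, Padic.norm_p]
      calc ((p : ℝ))⁻¹ ^ (k + 1) * ‖x‖ ≤ ((p : ℝ))⁻¹ ^ (k + 1) * (p : ℝ) ^ (k + 1) := by
            apply mul_le_mul_of_nonneg_left hx (by positivity)
        _ = 1 := by
            rw [← mul_pow, inv_mul_cancel₀ (by exact_mod_cast (Fact.out : p.Prime).pos.ne')]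
            simp
    set z : ℤ_[p] := ⟨(p : ℚ_[p]) ^ (k + 1) * x, hz⟩ with hzdef
    refine ⟨z.zmodRepr, ?_, ?_⟩
    · exact Finset.mem_range.mpr z.zmodRepr_lt_p
    · have hmem : z - (z.zmodRepr : ℤ_[p]) ∈ Ideal.span {(p : ℤ_[p]) ^ 1} := by
        rw [pow_one, ← PadicInt.maximalIdeal_eq_span_p]
        exact z.sub_zmodRepr_mem
      have hnorm : ‖z - (z.zmodRepr : ℤ_[p])‖ ≤ (p : ℝ) ^ (-(1 : ℕ) : ℤ) :=
        (PadicInt.norm_le_pow_iff_mem_span_pow _ 1).mpr hmem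
      have hnormQ : ‖(p : ℚ_[p]) ^ (k + 1) * x - (z.zmodRepr : ℚ_[p])‖ ≤ ((p : ℝ))⁻¹ := by
        have : ((z - (z.zmodRepr : ℤ_[p]) : ℤ_[p]) : ℚ_[p])
            = (p : ℚ_[p]) ^ (k + 1) * x - (z.zmodRepr : ℚ_[p]) := by
          push_cast [hzdef]
          rfl
        rw [PadicInt.norm_def, this] at hnorm
        simpa using hnorm
      have hxeq : x - (z.zmodRepr : ℚ_[p]) * ((p : ℚ_[p]) ^ ((k + 1 : ℕ) : ℤ))⁻¹
          = ((p : ℚ_[p]) ^ ((k + 1 : ℕ) : ℤ))⁻¹ * ((p : ℚ_[p]) ^ (k + 1) * x - (z.zmodRepr : ℚ_[p])) := by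
        rw [zpow_natCast, mul_sub, inv_mul_cancel_left₀ (pow_ne_zero _ hp0), mul_comm]
      rw [hxeq, norm_mul, hnormc]
      calc (p : ℝ) ^ (k + 1) * ‖(p : ℚ_[p]) ^ (k + 1) * x - (z.zmodRepr : ℚ_[p])‖
          ≤ (p : ℝ) ^ (k + 1) * ((p : ℝ))⁻¹ := by
            apply mul_le_mul_of_nonneg_left hnormQ (by positivity)
        _ = (p : ℝ) ^ k := by
            rw [pow_succ]
            field_simp
            exact mul_div_cancel_right₀ _ p_posR.ne'
  · rintro ⟨a, _, ha⟩
    have hcent : ‖(a : ℚ_[p]) * ((p : ℚ_[p]) ^ ((k + 1 : ℕ) : ℤ))⁻¹‖ ≤ (p : ℝ) ^ (k + 1) := by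
      rw [norm_mul, hnormc]
      have : ‖((a : ℤ) : ℚ_[p])‖ ≤ 1 := Padic.norm_int_le_one _
      calc ‖((a : ℕ) : ℚ_[p])‖ * (p : ℝ) ^ (k + 1) ≤ 1 * (p : ℝ) ^ (k + 1) := by
            apply mul_le_mul_of_nonneg_right _ (by positivity)
            exact_mod_cast this
        _ = _ := one_mul _
    have := Padic.nonarchimedean (x - (a : ℚ_[p]) * ((p : ℚ_[p]) ^ ((k + 1 : ℕ) : ℤ))⁻¹)
      ((a : ℚ_[p]) * ((p : ℚ_[p]) ^ ((k + 1 : ℕ) : ℤ))⁻¹)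
    rw [sub_add_cancel] at this
    refine this.trans (max_le (ha.trans ?_) hcent)
    exact pow_le_pow_right₀ (by exact_mod_cast (Fact.out : p.Prime).one_lt.le) (Nat.le_succ k)

end Ball

section Ball2
variable {p : ℕ} [Fact p.Prime]
open scoped ENNReal

lemma padicBall_disjoint (k : ℕ) :
    (↑(Finset.range p) : Set ℕ).PairwiseDisjoint
      (fun a : ℕ => (fun x : ℚ_[p] => x + (-((a : ℚ_[p]) * ((p : ℚ_[p]) ^ ((k + 1 : ℕ) : ℤ))⁻¹)))
        ⁻¹' {x : ℚ_[p] | ‖x‖ ≤ (p : ℝ) ^ k}) := by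
  intro a ha b hb hab
  simp only [Finset.coe_range, Set.mem_Iio] at ha hb
  refine Set.disjoint_left.mpr fun x hxa hxb => ?_
  simp only [Set.mem_preimage, Set.mem_setOf_eq, ← sub_eq_add_neg] at hxa hxb
  set c : ℚ_[p] := ((p : ℚ_[p]) ^ ((k + 1 : ℕ) : ℤ))⁻¹ with hc
  have hnormc : ‖c‖ = (p : ℝ) ^ (k + 1) := by
    rw [hc, norm_inv, Padic.norm_p_zpow, ← zpow_neg, neg_neg]
    norm_cast
  have hab1 : ‖(((a : ℤ) - b : ℤ) : ℚ_[p])‖ = 1 := by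
    apply le_antisymm (Padic.norm_int_le_one _)
    by_contra h
    push_neg at h
    have hd := (PadicInt.norm_int_lt_one_iff_dvd (p := p) _).mp (by rw [PadicInt.norm_def]; push_cast; exact h)
    have := Int.eq_zero_of_abs_lt_dvd hd (by rw [abs_lt]; omega)
    omega
  have hdiff : ‖(a : ℚ_[p]) * c - (b : ℚ_[p]) * c‖ = (p : ℝ) ^ (k + 1) := by
    rw [← sub_mul, norm_mul, hnormc]
    have : ((a : ℚ_[p]) - b) = (((a : ℤ) - b : ℤ) : ℚ_[p]) := by push_cast; ring
    rw [this, hab1, one_mul]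
  have hle : ‖(a : ℚ_[p]) * c - (b : ℚ_[p]) * c‖ ≤ (p : ℝ) ^ k := by
    have heq : (a : ℚ_[p]) * c - (b : ℚ_[p]) * c = (x - (b : ℚ_[p]) * c) + -(x - (a : ℚ_[p]) * c) := by
      ring
    rw [heq]
    refine (Padic.nonarchimedean _ _).trans (max_le hxb ?_)
    rw [norm_neg]
    exact hxa
  rw [hdiff] at hle
  have hp1 : (1 : ℝ) < p := by exact_mod_cast (Fact.out : p.Prime).one_lt
  have h2 : (p : ℝ) ^ k < (p : ℝ) ^ (k + 1) := pow_lt_pow_right₀ hp1 (by omega)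
  linarith

lemma padicBall_measure (μp : Measure ℚ_[p]) [μp.IsAddHaarMeasure]
    (hμp : μp {x : ℚ_[p] | ‖x‖ ≤ 1} = 1) (k : ℕ) :
    μp {x : ℚ_[p] | ‖x‖ ≤ (p : ℝ) ^ k} = (p : ℝ≥0∞) ^ k := by
  induction k with
  | zero => simpa using hμp
  | succ k ih =>
    rw [padicBall_succ, measure_biUnion_finset (padicBall_disjoint k)
      (fun a _ => ((continuous_add_right _).measurable (padicBall_measurableSet _)))]
    rw [Finset.sum_congr rfl (fun a _ => by rw [measure_preimage_add_right])]
    rw [Finset.sum_const, Finset.card_range, nsmul_eq_mul, ih, pow_succ]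
    ring
end Ball2


theorem stmt5 (p : ℕ) [Fact p.Prime] (μp : Measure ℚ_[p]) [μp.IsAddHaarMeasure]
    (hμp : μp {x : ℚ_[p] | ‖x‖ ≤ 1} = 1) :
    (∃ N : ℕ, ∀ n : ℕ, N ≤ n →
      (((volume : Measure ℝ).prod μp)
          {x : ℝ × ℚ_[p] | sizeD p (MR x.1 * 1) (MP p x.2 * dP p) ≤ (p : ℝ) ^ n}).toReal /
        (((volume : Measure ℝ).prod μp)
          {x : ℝ × ℚ_[p] | sizeD p (MR x.1) (MP p x.2) ≤ (p : ℝ) ^ n}).toReal =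
      (p : ℝ) ^ ((((n - 1) / 2 : ℕ) : ℤ) - ((n / 2 : ℕ) : ℤ)) ∧
      (Odd n →
        (((volume : Measure ℝ).prod μp)
            {x : ℝ × ℚ_[p] | sizeD p (MR x.1 * 1) (MP p x.2 * dP p) ≤ (p : ℝ) ^ n}).toReal /
          (((volume : Measure ℝ).prod μp)
            {x : ℝ × ℚ_[p] | sizeD p (MR x.1) (MP p x.2) ≤ (p : ℝ) ^ n}).toReal = 1) ∧
      (Even n →
        (((volume : Measure ℝ).prod μp)
            {x : ℝ × ℚ_[p] | sizeD p (MR x.1 * 1) (MP p x.2 * dP p) ≤ (p : ℝ) ^ n}).toReal /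
          (((volume : Measure ℝ).prod μp)
            {x : ℝ × ℚ_[p] | sizeD p (MR x.1) (MP p x.2) ≤ (p : ℝ) ^ n}).toReal = 1 / p)) ∧
    ¬ ∃ L : ℝ, Tendsto
        (fun n : ℕ =>
          (((volume : Measure ℝ).prod μp)
              {x : ℝ × ℚ_[p] | sizeD p (MR x.1 * 1) (MP p x.2 * dP p) ≤ (p : ℝ) ^ n}).toReal /
            (((volume : Measure ℝ).prod μp)
              {x : ℝ × ℚ_[p] | sizeD p (MR x.1) (MP p x.2) ≤ (p : ℝ) ^ n}).toReal)
        atTop (nhds L) := by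
  have hp1 : (1 : ℝ) < p := one_lt_pR
  set F : ℕ → ℝ := fun n =>
    (((volume : Measure ℝ).prod μp)
        {x : ℝ × ℚ_[p] | sizeD p (MR x.1 * 1) (MP p x.2 * dP p) ≤ (p : ℝ) ^ n}).toReal /
      (((volume : Measure ℝ).prod μp)
        {x : ℝ × ℚ_[p] | sizeD p (MR x.1) (MP p x.2) ≤ (p : ℝ) ^ n}).toReal with hF
  have key : ∀ n : ℕ, 2 ≤ n →
      F n = (p : ℝ) ^ ((((n - 1) / 2 : ℕ) : ℤ) - ((n / 2 : ℕ) : ℤ)) := by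
    intro n hn
    set r := Real.sqrt ((p : ℝ) ^ n) with hr
    have hrpos : 0 < r := Real.sqrt_pos.mpr (by positivity)
    have e1 : {x : ℝ × ℚ_[p] | sizeD p (MR x.1 * 1) (MP p x.2 * dP p) ≤ (p : ℝ) ^ n}
        = (Set.Icc (-r) r) ×ˢ {σ : ℚ_[p] | ‖σ‖ ≤ (p : ℝ) ^ ((n - 1) / 2)} := by
      ext x
      simp only [Set.mem_setOf_eq, sizeD, max_le_iff, mul_one, Set.mem_prod, Set.mem_Icc]
      rw [setR x.1 n hn, setP2 x.2 n (by omega), ← abs_le]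
    have e2 : {x : ℝ × ℚ_[p] | sizeD p (MR x.1) (MP p x.2) ≤ (p : ℝ) ^ n}
        = (Set.Icc (-r) r) ×ˢ {σ : ℚ_[p] | ‖σ‖ ≤ (p : ℝ) ^ (n / 2)} := by
      ext x
      simp only [Set.mem_setOf_eq, sizeD, max_le_iff, Set.mem_prod, Set.mem_Icc]
      rw [setR x.1 n hn, setP1 x.2 n, ← abs_le]
    rw [hF]
    simp only [e1, e2, Measure.prod_prod, Real.volume_Icc]
    rw [padicBall_measure μp hμp, padicBall_measure μp hμp,
      ENNReal.toReal_mul, ENNReal.toReal_mul, ENNReal.toReal_ofReal (by linarith),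
      ENNReal.toReal_pow, ENNReal.toReal_pow,
      (by simp : ((p : ENNReal)).toReal = (p : ℝ))]
    have h2r : r - -r = 2 * r := by ring
    rw [h2r, mul_div_mul_left _ _ (by positivity : (2 * r) ≠ 0),
      zpow_sub₀ (by positivity : (p : ℝ) ≠ 0), zpow_natCast, zpow_natCast]
  have keyOdd : ∀ n : ℕ, 2 ≤ n → Odd n → F n = 1 := by
    intro n hn hodd
    rw [key n hn]
    have h0 : (((n - 1) / 2 : ℕ) : ℤ) - ((n / 2 : ℕ) : ℤ) = 0 := by
      obtain ⟨k, rfl⟩ := hodd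
      omega
    rw [h0, zpow_zero]
  have keyEven : ∀ n : ℕ, 2 ≤ n → Even n → F n = 1 / p := by
    intro n hn heven
    rw [key n hn]
    have h0 : (((n - 1) / 2 : ℕ) : ℤ) - ((n / 2 : ℕ) : ℤ) = -1 := by
      obtain ⟨k, rfl⟩ := heven
      omega
    rw [h0, zpow_neg_one, one_div]
  constructor
  · exact ⟨2, fun n hn => ⟨key n hn, keyOdd n hn, keyEven n hn⟩⟩
  · rintro ⟨L, hL⟩
    have hgo : Tendsto (fun k : ℕ => 2 * k + 3) atTop atTop :=
      tendsto_atTop_mono (fun k => (by omega : k ≤ 2 * k + 3) : ∀ k : ℕ, id k ≤ 2 * k + 3) tendsto_id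
    have hge : Tendsto (fun k : ℕ => 2 * k + 2) atTop atTop :=
      tendsto_atTop_mono (fun k => (by omega : k ≤ 2 * k + 2) : ∀ k : ℕ, id k ≤ 2 * k + 2) tendsto_id
    have ho : Tendsto (fun k : ℕ => F (2 * k + 3)) atTop (nhds L) := hL.comp hgo
    have he : Tendsto (fun k : ℕ => F (2 * k + 2)) atTop (nhds L) := hL.comp hge
    have ho1 : (fun k : ℕ => F (2 * k + 3)) = fun _ => (1 : ℝ) :=
      funext fun k => keyOdd _ (by omega) ⟨k + 1, by omega⟩
    have he1 : (fun k : ℕ => F (2 * k + 2)) = fun _ => (1 / p : ℝ) :=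
      funext fun k => keyEven _ (by omega) ⟨k + 1, by omega⟩
    rw [ho1] at ho
    rw [he1] at he
    have hL1 : L = 1 := tendsto_nhds_unique ho tendsto_const_nhds
    have hL2 : L = 1 / p := tendsto_nhds_unique he tendsto_const_nhds
    rw [hL1] at hL2
    have hpne : (p : ℝ) ≠ 0 := by positivity
    rw [eq_div_iff hpne, one_mul] at hL2
    linarith
end

section
/- For s ∈ ℝ let u_s ∈ SL(2,ℝ) be the matrix with rows (1,s),(0,1). Then for every g ∈ SL(2,ℝ) with entries g_{ij}, the limit lim_{t→∞} (1/(2t)) · Leb{s ∈ ℝ : ‖u_s g‖ ≤ t} exists and equals 1/√(g₂₁² + g₂₂²). In particular, the ratio Leb{s : ‖u_s g‖ ≤ t} / Leb{s : ‖u_s‖ ≤ t} converges to 1/√(g₂₁² + g₂₂²) as t → ∞. -/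
/-!
STATEMENT 9.
For g ∈ SL(2,ℝ), (1/(2t))·Leb{s : ‖u_s g‖ ≤ t} → 1/√(g₂₁² + g₂₂²) as t → ∞, and hence the
ratio Leb{s : ‖u_s g‖ ≤ t} / Leb{s : ‖u_s‖ ≤ t} converges to the same limit.
-/

open MeasureTheory Filter

/-- The Frobenius norm of a real 2×2 matrix. -/
noncomputable def frobNorm (g : Matrix (Fin 2) (Fin 2) ℝ) : ℝ :=
  Real.sqrt (∑ i, ∑ j, (g i j) ^ 2)

/-- The upper-triangular unipotent matrix u_s. -/
noncomputable def uMat (s : ℝ) : Matrix (Fin 2) (Fin 2) ℝ := !![1, s; 0, 1]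

lemma main_lemma (m : Matrix (Fin 2) (Fin 2) ℝ) (hdet : m.det = 1) :
    Tendsto (fun t : ℝ =>
        (volume {s : ℝ | frobNorm (uMat s * m) ≤ t}).toReal / (2 * t)) atTop
      (nhds (1 / Real.sqrt ((m 1 0) ^ 2 + (m 1 1) ^ 2))) := by
  set a := m 0 0 with ha
  set b := m 0 1 with hb
  set c := m 1 0 with hc
  set d := m 1 1 with hd
  have hdet' : a * d - b * c = 1 := by
    rw [Matrix.det_fin_two] at hdet; exact hdet
  have hcd : c ≠ 0 ∨ d ≠ 0 := by
    by_contra h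
    push_neg at h
    rw [h.1, h.2] at hdet'
    norm_num at hdet'
  have hr2 : 0 < c ^ 2 + d ^ 2 := by
    rcases hcd with h | h
    · positivity
    · positivity
  set r2 : ℝ := c ^ 2 + d ^ 2 with hr2def
  set p : ℝ := a * c + b * d with hpdef
  set s0 : ℝ := p / r2 with hs0
  set K : ℝ := r2 + 1 / r2 with hKdef
  have hK : 0 < K := by positivity
  have hfr : ∀ s : ℝ, frobNorm (uMat s * m) =
      Real.sqrt (r2 * (s + s0) ^ 2 + K) := by
    intro s
    have hmat : (uMat s * m) = !![a + s * c, b + s * d; c, d] := by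
      ext i j
      fin_cases i <;> fin_cases j <;>
        simp [uMat, Matrix.mul_apply, Fin.sum_univ_two, ha, hb, hc, hd]
    rw [frobNorm, hmat]
    congr 1
    simp [Fin.sum_univ_two]
    rw [hKdef, hs0, hpdef, hr2def]
    have hne : c ^ 2 + d ^ 2 ≠ 0 := hr2.ne'
    field_simp
    linear_combination (a * d - b * c + 1) * hdet'
  -- eventual equality
  have hev : ∀ᶠ t : ℝ in atTop,
      (volume {s : ℝ | frobNorm (uMat s * m) ≤ t}).toReal / (2 * t) =
        Real.sqrt ((1 - K / t ^ 2) / r2) := by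
    filter_upwards [eventually_ge_atTop (max (Real.sqrt K + 1) 1)] with t ht
    have ht1 : (1 : ℝ) ≤ t := le_trans (le_max_right _ _) ht
    have ht0 : (0 : ℝ) < t := by linarith
    have htK : K < t ^ 2 := by
      have h1 : Real.sqrt K + 1 ≤ t := le_trans (le_max_left _ _) ht
      have h2 : Real.sqrt K < t := by
        have := Real.sqrt_nonneg K; linarith
      calc K = Real.sqrt K ^ 2 := (Real.sq_sqrt hK.le).symm
        _ < t ^ 2 := by nlinarith [Real.sqrt_nonneg K]
    set M : ℝ := Real.sqrt ((t ^ 2 - K) / r2) with hM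
    have hMnn : 0 ≤ M := Real.sqrt_nonneg _
    have hset : {s : ℝ | frobNorm (uMat s * m) ≤ t} = Set.Icc (-s0 - M) (-s0 + M) := by
      ext s
      simp only [Set.mem_setOf_eq, Set.mem_Icc, hfr]
      rw [Real.sqrt_le_iff]
      constructor
      · rintro ⟨-, h⟩
        have h2 : (s + s0) ^ 2 ≤ (t ^ 2 - K) / r2 := by
          rw [le_div_iff₀ hr2]; nlinarith
        have h3 : |s + s0| ≤ M := by
          rw [hM, show |s + s0| = Real.sqrt ((s + s0) ^ 2) from (Real.sqrt_sq_eq_abs _).symm]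
          exact Real.sqrt_le_sqrt h2
        rw [abs_le] at h3
        constructor <;> linarith [h3.1, h3.2]
      · rintro ⟨h1, h2⟩
        have h3 : |s + s0| ≤ M := by rw [abs_le]; constructor <;> linarith
        have h4 : (s + s0) ^ 2 ≤ (t ^ 2 - K) / r2 := by
          have := Real.sq_sqrt (show (0:ℝ) ≤ (t ^ 2 - K) / r2 from
            div_nonneg (by linarith) hr2.le)
          nlinarith [sq_abs (s + s0), sq_nonneg (|s + s0| + M)]
        rw [le_div_iff₀ hr2] at h4
        exact ⟨ht0.le, by nlinarith⟩
    rw [hset, Real.volume_Icc, ENNReal.toReal_ofReal (by linarith : (0:ℝ) ≤ -s0 + M - (-s0 - M))]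
    have : -s0 + M - (-s0 - M) = 2 * M := by ring
    rw [this]
    rw [mul_div_mul_left M t (two_ne_zero), hM]
    rw [show (t ^ 2 - K) / r2 = ((1 - K / t ^ 2) / r2) * t ^ 2 by field_simp]
    have h5 : (0:ℝ) ≤ (1 - K / t ^ 2) / r2 := by
      apply div_nonneg _ hr2.le
      have h6 : K / t ^ 2 ≤ 1 := by
        rw [div_le_one (by positivity)]; linarith
      linarith
    rw [Real.sqrt_mul h5, Real.sqrt_sq ht0.le]
    rw [mul_div_assoc, div_self ht0.ne', mul_one]
  -- the limit
  have hlim : Tendsto (fun t : ℝ => Real.sqrt ((1 - K / t ^ 2) / r2)) atTop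
      (nhds (1 / Real.sqrt r2)) := by
    have h1 : Tendsto (fun t : ℝ => K / t ^ 2) atTop (nhds 0) := by
      exact Tendsto.div_atTop tendsto_const_nhds (tendsto_pow_atTop two_ne_zero)
    have h2 : Tendsto (fun t : ℝ => (1 - K / t ^ 2) / r2) atTop (nhds (1 / r2)) := by
      have h2a : Tendsto (fun t : ℝ => 1 - K / t ^ 2) atTop (nhds 1) := by
        simpa using (tendsto_const_nhds (x := (1:ℝ))).sub h1
      simpa using h2a.div_const r2
    have h3 := (Real.continuous_sqrt.continuousAt.tendsto).comp h2
    have h4 : Real.sqrt (1 / r2) = 1 / Real.sqrt r2 := by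
      rw [one_div, one_div, Real.sqrt_inv]
    rw [h4] at h3
    exact h3
  exact Tendsto.congr' (Filter.EventuallyEq.symm hev) hlim

theorem stmt9 (g : Matrix.SpecialLinearGroup (Fin 2) ℝ) :
    Tendsto
        (fun t : ℝ =>
          (volume {s : ℝ | frobNorm (uMat s * (g : Matrix (Fin 2) (Fin 2) ℝ)) ≤ t}).toReal /
            (2 * t))
        atTop
        (nhds (1 / Real.sqrt (((g : Matrix (Fin 2) (Fin 2) ℝ) 1 0) ^ 2 +
          ((g : Matrix (Fin 2) (Fin 2) ℝ) 1 1) ^ 2))) ∧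
      Tendsto
        (fun t : ℝ =>
          (volume {s : ℝ | frobNorm (uMat s * (g : Matrix (Fin 2) (Fin 2) ℝ)) ≤ t}).toReal /
            (volume {s : ℝ | frobNorm (uMat s) ≤ t}).toReal)
        atTop
        (nhds (1 / Real.sqrt (((g : Matrix (Fin 2) (Fin 2) ℝ) 1 0) ^ 2 +
          ((g : Matrix (Fin 2) (Fin 2) ℝ) 1 1) ^ 2))) := by
  have hmain := main_lemma (g : Matrix (Fin 2) (Fin 2) ℝ) g.property
  refine ⟨hmain, ?_⟩
  have hone := main_lemma (1 : Matrix (Fin 2) (Fin 2) ℝ) Matrix.det_one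
  have hone' : Tendsto (fun t : ℝ =>
      (volume {s : ℝ | frobNorm (uMat s) ≤ t}).toReal / (2 * t)) atTop (nhds 1) := by
    have h1 : ((1 : Matrix (Fin 2) (Fin 2) ℝ) 1 0) = 0 := by simp [Matrix.one_apply]
    have h2 : ((1 : Matrix (Fin 2) (Fin 2) ℝ) 1 1) = 1 := by simp [Matrix.one_apply]
    rw [h1, h2] at hone
    norm_num at hone
    simpa [mul_one] using hone
  have hdiv := hmain.div hone' one_ne_zero
  rw [div_one] at hdiv
  apply hdiv.congr'
  filter_upwards [eventually_ge_atTop (1 : ℝ)] with t ht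
  have h2t : (2 : ℝ) * t ≠ 0 := by positivity
  set f := (volume {s : ℝ | frobNorm (uMat s * (g : Matrix (Fin 2) (Fin 2) ℝ)) ≤ t}).toReal
  set h := (volume {s : ℝ | frobNorm (uMat s) ≤ t}).toReal
  simp only [Pi.div_apply]
  rw [div_eq_mul_inv (f / (2 * t)), inv_div, div_mul_div_comm, mul_comm f (2 * t),
    mul_div_mul_left _ _ h2t]
end
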